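/- Let a : ℝ → ℝ satisfy a(x) ≥ 1 for a.e. x. Then for every φ̂ ∈ Ḣ¹(ℝ) (locally absolutely continuous with ∂ₓφ̂ ∈ L²) satisfying lim_{x→±∞} φ̂(x) = ±π/2, one has G(φ̂) = ∫_ℝ (a(x)(∂ₓφ̂)² + a(x) cos²φ̂) dx ≥ 4. -/

import Mathlib

open Real MeasureTheory Filter Set Topology

/-- Bogomolny lower bound: if `a ≥ 1` a.e. and `φ̂ ∈ Ḣ¹(ℝ)` connects `−π/2` to `π/2`,
then `G(φ̂) = ∫ (a (∂ₓφ̂)² + a cos²φ̂) ≥ 4` (the energy being understood in `[0, ∞]`). -/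
theorem statement4 (a φ φ' : ℝ → ℝ)
    (ha : ∀ᵐ x, 1 ≤ a x)
    (hφ : ∀ x, HasDerivAt φ (φ' x) x)
    (hL2 : Integrable (fun x => (φ' x) ^ 2))
    (htop : Tendsto φ atTop (nhds (π / 2)))
    (hbot : Tendsto φ atBot (nhds (-(π / 2)))) :
    (4 : ENNReal) ≤ ∫⁻ x, ENNReal.ofReal (a x * (φ' x) ^ 2 + a x * Real.cos (φ x) ^ 2) := by
  have hφc : Continuous φ := continuous_iff_continuousAt.mpr fun x => (hφ x).continuousAt
  have hφ'm : Measurable φ' := by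
    have h : φ' = deriv φ := funext fun x => ((hφ x).deriv).symm
    rw [h]; exact measurable_deriv φ
  set I := ∫⁻ x, ENNReal.ofReal (a x * (φ' x) ^ 2 + a x * Real.cos (φ x) ^ 2) with hI
  -- key bound for large R
  have key : ∀ R : ℝ, 0 ≤ R →
      ENNReal.ofReal (2 * (Real.sin (φ R) - Real.sin (φ (-R)))) ≤ I := by
    intro R hR
    have hle : -R ≤ R := by linarith
    have h1 : IntegrableOn (fun x => φ' x ^ 2 + Real.cos (φ x) ^ 2) (Icc (-R) R) :=
      hL2.integrableOn.add ((Continuous.integrableOn_Icc ((Real.continuous_cos.comp hφc).pow 2)))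
    have hmeas : AEStronglyMeasurable (fun x => 2 * Real.cos (φ x) * φ' x)
        (volume.restrict (Icc (-R) R)) := by
      exact (((measurable_const.mul (hφc.measurable.cos)).mul hφ'm).aestronglyMeasurable)
    have hbnd : IntegrableOn (fun x => φ' x ^ 2 + 1) (Icc (-R) R) :=
      hL2.integrableOn.add (integrableOn_const measure_Icc_lt_top.ne)
    have h2 : IntegrableOn (fun x => 2 * Real.cos (φ x) * φ' x) (Icc (-R) R) := by
      apply Integrable.mono hbnd hmeas
      filter_upwards with x
      have hc := Real.abs_cos_le_one (φ x)
      simp only [Real.norm_eq_abs]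
      rw [abs_of_nonneg (by positivity : (0:ℝ) ≤ φ' x ^ 2 + 1)]
      have : |2 * Real.cos (φ x) * φ' x| = 2 * |Real.cos (φ x)| * |φ' x| := by
        rw [abs_mul, abs_mul]; simp [abs_of_nonneg]
      rw [this]
      nlinarith [sq_nonneg (|Real.cos (φ x)| - |φ' x|), sq_abs (φ' x), abs_nonneg (φ' x), abs_nonneg (Real.cos (φ x))]
    have h3 : ∫ x in Icc (-R) R, 2 * Real.cos (φ x) * φ' x
        ≤ ∫ x in Icc (-R) R, (φ' x ^ 2 + Real.cos (φ x) ^ 2) := by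
      apply setIntegral_mono_on h2 h1 measurableSet_Icc
      intro x _
      nlinarith [sq_nonneg (φ' x - Real.cos (φ x))]
    have h4 : ∫ x in Icc (-R) R, 2 * Real.cos (φ x) * φ' x
        = 2 * (Real.sin (φ R) - Real.sin (φ (-R))) := by
      rw [MeasureTheory.integral_Icc_eq_integral_Ioc, ← intervalIntegral.integral_of_le hle]
      have h2' : IntegrableOn (fun x => 2 * Real.cos (φ x) * φ' x) (uIcc (-R) R) := by
        rw [uIcc_of_le hle]; exact h2
      have hd : ∀ y ∈ uIcc (-R) R, HasDerivAt (fun z => 2 * Real.sin (φ z))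
          (2 * Real.cos (φ y) * φ' y) y := by
        intro y _
        have h := HasDerivAt.const_mul (2 : ℝ) (hφ y).sin
        simpa [mul_assoc] using h
      have hft := intervalIntegral.integral_eq_sub_of_hasDerivAt hd h2'.intervalIntegrable
      rw [hft]; ring
    calc ENNReal.ofReal (2 * (Real.sin (φ R) - Real.sin (φ (-R))))
        ≤ ENNReal.ofReal (∫ x in Icc (-R) R, (φ' x ^ 2 + Real.cos (φ x) ^ 2)) :=
          ENNReal.ofReal_le_ofReal (h4 ▸ h3)
      _ = ∫⁻ x in Icc (-R) R, ENNReal.ofReal (φ' x ^ 2 + Real.cos (φ x) ^ 2) :=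
          MeasureTheory.ofReal_integral_eq_lintegral_ofReal h1
            (Filter.Eventually.of_forall fun x => by positivity)
      _ ≤ ∫⁻ x, ENNReal.ofReal (φ' x ^ 2 + Real.cos (φ x) ^ 2) :=
          setLIntegral_le_lintegral _ _
      _ ≤ I := by
          apply lintegral_mono_ae
          filter_upwards [ha] with x hx
          apply ENNReal.ofReal_le_ofReal
          nlinarith [sq_nonneg (φ' x), sq_nonneg (Real.cos (φ x))]
  -- limit
  have hlim : Tendsto (fun R => 2 * (Real.sin (φ R) - Real.sin (φ (-R)))) atTop (nhds 4) := by
    have h1 : Tendsto (fun R => Real.sin (φ R)) atTop (nhds 1) := by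
      have := (Real.continuous_sin.tendsto (π / 2)).comp htop
      simpa [Function.comp_def] using this
    have h2 : Tendsto (fun R => Real.sin (φ (-R))) atTop (nhds (-1)) := by
      have := (Real.continuous_sin.tendsto (-(π / 2))).comp (hbot.comp tendsto_neg_atTop_atBot)
      simpa [Function.comp_def] using this
    have := (h1.sub h2).const_mul 2
    norm_num at this
    exact this
  have hlim' : Tendsto (fun R => ENNReal.ofReal (2 * (Real.sin (φ R) - Real.sin (φ (-R)))))
      atTop (nhds (ENNReal.ofReal 4)) := (ENNReal.continuous_ofReal.tendsto 4).comp hlim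
  have h4 : (4 : ENNReal) = ENNReal.ofReal 4 := by norm_num
  rw [h4]
  exact le_of_tendsto hlim' (eventually_atTop.mpr ⟨0, fun R hR => key R hR⟩)
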